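/- There exists a constant C > 0 such that for every n ≥ 1 and every real p with 0 ≤ p ≤ 1/2, the expected optimisation time of the (1+1) EA with one-bit prior noise probability p on LeadingOnes is at most 2^{C·n}. -/

import Mathlib

open Finset ENNReal

/-- A search point: a bit string of length `n`. -/
abbrev Point (n : ℕ) := Fin n → Bool

/-- The LeadingOnes fitness: the length of the longest all-ones prefix. -/
def LO {n : ℕ} (x : Point n) : ℕ :=
  (Finset.univ.filter fun i : Fin n => ∀ j : Fin n, j ≤ i → x j = true).card

/-- The all-ones string, the unique global optimum of LeadingOnes. -/
def allOnes (n : ℕ) : Point n := fun _ => true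

/-- Probability that standard bit mutation (flip each bit independently with
probability `1/n`) turns `x` into `y`. -/
noncomputable def mutProb (n : ℕ) (x y : Point n) : ℝ :=
  (1 / n) ^ hammingDist x y * (1 - 1 / n) ^ (n - hammingDist x y)

/-- Probability that one-bit prior noise with probability `p` turns `x` into `u`:
with probability `1 - p` no noise occurs, otherwise one uniformly random bit flips. -/
noncomputable def oneBitNoise (n : ℕ) (p : ℝ) (x u : Point n) : ℝ :=
  (if u = x then 1 - p else 0) + (if hammingDist x u = 1 then p / n else 0)

/-- Probability that offspring `y` is accepted against parent `x`, i.e. that the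
noisy fitness of `y` is at least the noisy fitness of `x` (noise applied
independently to parent and offspring). -/
noncomputable def accProb (n : ℕ) (noise : Point n → Point n → ℝ)
    (f : Point n → ℝ) (x y : Point n) : ℝ :=
  ∑ u : Point n, ∑ v : Point n,
    noise x u * noise y v * (if f u ≤ f v then 1 else 0)

/-- One-generation transition probability of a (1+1)-type algorithm with mutation
kernel `mutK`, prior-noise kernel `noise` and fitness `f`: mutation creates an
offspring, which replaces the parent iff its noisy fitness is at least the
parent's noisy fitness. -/
noncomputable def step (n : ℕ) (mutK noise : Point n → Point n → ℝ)
    (f : Point n → ℝ) (x z : Point n) : ℝ :=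
  mutK x z * accProb n noise f x z
    + (if z = x then ∑ y : Point n, mutK x y * (1 - accProb n noise f x y) else 0)

/-- One-generation transition probability of the (1+1) EA with one-bit prior
noise probability `p` on LeadingOnes. -/
noncomputable def stepEA (n : ℕ) (p : ℝ) : Point n → Point n → ℝ :=
  step n (mutProb n) (oneBitNoise n p) fun x => (LO x : ℝ)

-- ====== auxiliary lemmas ======

section Basic
variable {n : ℕ} {p : ℝ}

lemma hammingDist_def' (x y : Point n) :
    hammingDist x y = (univ.filter fun i => x i ≠ y i).card := rfl

lemma noise_nonneg (hp0 : 0 ≤ p) (hp1 : p ≤ 1) (x u : Point n) :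
    0 ≤ oneBitNoise n p x u := by
  unfold oneBitNoise
  have h1 : (0:ℝ) ≤ 1 - p := by linarith
  have h2 : (0:ℝ) ≤ p / n := by positivity
  positivity

lemma sphere_eq_image (x : Point n) :
    (univ.filter fun u : Point n => hammingDist x u = 1)
      = univ.image (fun i : Fin n => Function.update x i (!x i)) := by
  ext u
  simp only [mem_filter, mem_univ, true_and, mem_image]
  constructor
  · intro h
    rw [hammingDist_def', card_eq_one] at h
    obtain ⟨i, hi⟩ := h
    refine ⟨i, ?_⟩
    funext j
    by_cases hji : j = i
    · subst hji
      have : j ∈ univ.filter fun i => x i ≠ u i := by rw [hi]; exact mem_singleton_self j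
      have hne : x j ≠ u j := (mem_filter.1 this).2
      rw [Function.update_self]
      cases hxj : x j <;> cases huj : u j <;> simp_all
    · have : j ∉ univ.filter fun i => x i ≠ u i := by
        rw [hi]; simp [hji]
      have heq : ¬ (x j ≠ u j) := fun hc => this (mem_filter.2 ⟨mem_univ j, hc⟩)
      push_neg at heq
      rw [Function.update_of_ne hji, heq]
  · rintro ⟨i, rfl⟩
    rw [hammingDist_def']
    have : (univ.filter fun j => x j ≠ Function.update x i (!x i) j) = {i} := by
      ext j
      simp only [mem_filter, mem_univ, true_and, mem_singleton]
      by_cases hji : j = i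
      · subst hji; simp [Function.update_self]
      · simp [Function.update_of_ne hji, hji]
    rw [this, card_singleton]

lemma update_injective (x : Point n) :
    Function.Injective (fun i : Fin n => Function.update x i (!x i)) := by
  intro i j h
  by_contra hij
  have := congrFun h i
  simp only [Function.update_self, Function.update_of_ne hij] at this
  exact (Bool.not_ne_self (x i)).elim (by
    cases hx : x i <;> rw [hx] at this <;> simp_all)

lemma sphere_card (x : Point n) :
    (univ.filter fun u : Point n => hammingDist x u = 1).card = n := by
  rw [sphere_eq_image, card_image_of_injective _ (update_injective x), card_univ,
    Fintype.card_fin]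

lemma noise_sum (hn : 1 ≤ n) (x : Point n) :
    ∑ u : Point n, oneBitNoise n p x u = 1 := by
  unfold oneBitNoise
  rw [Finset.sum_add_distrib]
  have h1 : (∑ u : Point n, if u = x then 1 - p else 0) = 1 - p := by
    rw [Finset.sum_ite_eq' univ x (fun _ => 1 - p)]
    simp
  have h2 : (∑ u : Point n, if hammingDist x u = 1 then p / n else 0) = p := by
    rw [← Finset.sum_filter, Finset.sum_const, sphere_card x, nsmul_eq_mul]
    field_simp
  rw [h1, h2]; ring

lemma mutProb_eq_prod (x z : Point n) :
    mutProb n x z = ∏ i, (if x i = z i then (1 - 1/(n:ℝ)) else 1/(n:ℝ)) := by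
  rw [← Finset.prod_filter_mul_prod_filter_not univ (fun i => x i = z i)]
  have h1 : (∏ i ∈ univ.filter fun i => x i = z i, if x i = z i then (1 - 1/(n:ℝ)) else 1/(n:ℝ))
      = (1 - 1/(n:ℝ)) ^ (univ.filter fun i => x i = z i).card := by
    rw [Finset.prod_congr rfl (fun i hi => if_pos (mem_filter.1 hi).2), Finset.prod_const]
  have h2 : (∏ i ∈ univ.filter fun i => ¬ (x i = z i), if x i = z i then (1 - 1/(n:ℝ)) else 1/(n:ℝ))
      = (1/(n:ℝ)) ^ (univ.filter fun i => ¬ (x i = z i)).card := by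
    rw [Finset.prod_congr rfl (fun i hi => if_neg (mem_filter.1 hi).2), Finset.prod_const]
  rw [h1, h2]
  have hd : hammingDist x z = (univ.filter fun i => ¬ (x i = z i)).card := rfl
  have hcard : (univ.filter fun i => x i = z i).card = n - hammingDist x z := by
    have := Finset.card_filter_add_card_filter_not (s := (univ : Finset (Fin n)))
      (p := fun i => x i = z i)
    rw [card_univ, Fintype.card_fin] at this
    omega
  rw [hcard, ← hd, mutProb]
  ring

lemma mutProb_nonneg (hn : 1 ≤ n) (x z : Point n) : 0 ≤ mutProb n x z := by
  have h1 : (0:ℝ) ≤ 1/(n:ℝ) := by positivity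
  have h2 : (0:ℝ) ≤ 1 - 1/(n:ℝ) := by
    have : (1:ℝ) ≤ n := by exact_mod_cast hn
    have : 1/(n:ℝ) ≤ 1 := by
      rw [div_le_one (by linarith)]; linarith
    linarith
  unfold mutProb
  positivity

lemma mutProb_sum (hn : 1 ≤ n) (x : Point n) : ∑ z : Point n, mutProb n x z = 1 := by
  have : ∀ z : Point n, mutProb n x z = ∏ i, (if x i = z i then (1 - 1/(n:ℝ)) else 1/(n:ℝ)) :=
    mutProb_eq_prod x
  rw [Finset.sum_congr rfl (fun z _ => this z)]
  have := Finset.prod_univ_sum (fun _ : Fin n => (univ : Finset Bool))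
    (fun i b => if x i = b then (1 - 1/(n:ℝ)) else 1/(n:ℝ))
  rw [Fintype.piFinset_univ] at this
  rw [← this]
  have h1 : ∀ i : Fin n, (∑ b : Bool, if x i = b then (1 - 1/(n:ℝ)) else 1/(n:ℝ)) = 1 := by
    intro i
    rw [Fintype.sum_bool]
    cases hx : x i <;> simp <;> ring
  rw [Finset.prod_congr rfl (fun i _ => h1 i), Finset.prod_const_one]

end Basic
section Acc
variable {n : ℕ} {p : ℝ}

lemma acc_nonneg {noise : Point n → Point n → ℝ} (h : ∀ x u, 0 ≤ noise x u)
    (f : Point n → ℝ) (x y : Point n) : 0 ≤ accProb n noise f x y := by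
  apply Finset.sum_nonneg; intro u _
  apply Finset.sum_nonneg; intro v _
  have := h x u; have := h y v
  positivity

lemma acc_le_one {noise : Point n → Point n → ℝ} (h : ∀ x u, 0 ≤ noise x u)
    (hsum : ∀ x, ∑ u : Point n, noise x u = 1)
    (f : Point n → ℝ) (x y : Point n) : accProb n noise f x y ≤ 1 := by
  have hle : accProb n noise f x y ≤ ∑ u : Point n, ∑ v : Point n, noise x u * noise y v := by
    apply Finset.sum_le_sum; intro u _
    apply Finset.sum_le_sum; intro v _
    have h1 := h x u; have h2 := h y v
    by_cases hf : f u ≤ f v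
    · rw [if_pos hf, mul_one]
    · rw [if_neg hf, mul_zero]; positivity
  calc accProb n noise f x y ≤ ∑ u : Point n, ∑ v : Point n, noise x u * noise y v := hle
    _ = (∑ u : Point n, noise x u) * (∑ v : Point n, noise y v) := by
        rw [Finset.sum_mul]
        exact Finset.sum_congr rfl fun u _ => by rw [Finset.mul_sum]
    _ = 1 := by rw [hsum x, hsum y, mul_one]

lemma noise_self (x : Point n) : oneBitNoise n p x x = 1 - p := by
  unfold oneBitNoise
  rw [if_pos rfl, if_neg (by simp [hammingDist_self]), add_zero]

lemma acc_lower (hp0 : 0 ≤ p) (hp1 : p ≤ 1) {x y : Point n} (hLO : LO x ≤ LO y) :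
    (1 - p)^2 ≤ accProb n (oneBitNoise n p) (fun z => (LO z : ℝ)) x y := by
  have hnn := noise_nonneg (n := n) hp0 hp1
  have hterm : ∀ u : Point n, 0 ≤ ∑ v : Point n,
      oneBitNoise n p x u * oneBitNoise n p y v * (if (LO v:ℝ) ≥ (LO u:ℝ) then 1 else 0) := by
    intro u
    apply Finset.sum_nonneg; intro v _
    have := hnn x u; have := hnn y v
    positivity
  unfold accProb
  have h1 : (∑ v : Point n, oneBitNoise n p x x * oneBitNoise n p y v *
      (if (LO x:ℝ) ≤ (LO v:ℝ) then 1 else 0)) ≥ (1-p)^2 := by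
    have hsingle : oneBitNoise n p x x * oneBitNoise n p y y *
        (if (LO x:ℝ) ≤ (LO y:ℝ) then 1 else 0) = (1-p)^2 := by
      rw [noise_self, noise_self, if_pos (by exact_mod_cast hLO)]
      ring
    calc (1-p)^2 = oneBitNoise n p x x * oneBitNoise n p y y *
        (if (LO x:ℝ) ≤ (LO y:ℝ) then 1 else 0) := hsingle.symm
      _ ≤ _ := by
        apply Finset.single_le_sum (f := fun v => oneBitNoise n p x x * oneBitNoise n p y v *
          (if (LO x:ℝ) ≤ (LO v:ℝ) then 1 else 0)) _ (mem_univ y)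
        intro v _
        have := hnn x x; have := hnn y v
        by_cases hf : (LO x:ℝ) ≤ (LO v:ℝ)
        · rw [if_pos hf, mul_one]; positivity
        · rw [if_neg hf, mul_zero]
  calc (1-p)^2 ≤ ∑ v : Point n, oneBitNoise n p x x * oneBitNoise n p y v *
      (if (LO x:ℝ) ≤ (LO v:ℝ) then 1 else 0) := h1
    _ ≤ ∑ u : Point n, ∑ v : Point n, oneBitNoise n p x u * oneBitNoise n p y v *
        (if (LO u:ℝ) ≤ (LO v:ℝ) then 1 else 0) := by
      apply Finset.single_le_sum (f := fun u => ∑ v : Point n, oneBitNoise n p x u *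
        oneBitNoise n p y v * (if (LO u:ℝ) ≤ (LO v:ℝ) then 1 else 0)) _ (mem_univ x)
      intro u _
      apply Finset.sum_nonneg; intro v _
      have := hnn x u; have := hnn y v
      by_cases hf : (LO u:ℝ) ≤ (LO v:ℝ)
      · rw [if_pos hf, mul_one]; positivity
      · rw [if_neg hf, mul_zero]

end Acc

section Step
variable {n : ℕ} {p : ℝ}

lemma stepEA_sum (hn : 1 ≤ n) (hp0 : 0 ≤ p) (hp1 : p ≤ 1) (x : Point n) :
    ∑ z : Point n, stepEA n p x z = 1 := by
  unfold stepEA step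
  rw [Finset.sum_add_distrib]
  have h2 : (∑ z : Point n, if z = x then
      (∑ y : Point n, mutProb n x y * (1 - accProb n (oneBitNoise n p) (fun x => (LO x:ℝ)) x y))
      else 0) = ∑ y : Point n, mutProb n x y * (1 - accProb n (oneBitNoise n p) (fun x => (LO x:ℝ)) x y) := by
    rw [Finset.sum_ite_eq' univ x]
    simp
  rw [h2, ← Finset.sum_add_distrib]
  have : ∀ z : Point n, mutProb n x z * accProb n (oneBitNoise n p) (fun x => (LO x:ℝ)) x z
      + mutProb n x z * (1 - accProb n (oneBitNoise n p) (fun x => (LO x:ℝ)) x z) = mutProb n x z := by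
    intro z; ring
  rw [Finset.sum_congr rfl (fun z _ => this z), mutProb_sum hn]

lemma stepEA_nonneg (hn : 1 ≤ n) (hp0 : 0 ≤ p) (hp1 : p ≤ 1) (x z : Point n) :
    0 ≤ stepEA n p x z := by
  have hnn := noise_nonneg (n := n) hp0 hp1
  have hsum := noise_sum (n := n) (p := p) hn
  unfold stepEA step
  have h1 : 0 ≤ mutProb n x z * accProb n (oneBitNoise n p) (fun x => (LO x:ℝ)) x z :=
    mul_nonneg (mutProb_nonneg hn x z) (acc_nonneg hnn _ x z)
  have h2 : (0:ℝ) ≤ if z = x then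
      (∑ y : Point n, mutProb n x y * (1 - accProb n (oneBitNoise n p) (fun x => (LO x:ℝ)) x y))
      else 0 := by
    split
    · apply Finset.sum_nonneg; intro y _
      apply mul_nonneg (mutProb_nonneg hn x y)
      have := acc_le_one hnn hsum (fun x => (LO x:ℝ)) x y
      linarith
    · exact le_refl 0
  linarith

lemma LO_mono {x y : Point n} (h : ∀ i, x i = true → y i = true) : LO x ≤ LO y := by
  unfold LO
  apply Finset.card_le_card
  intro i hi
  rw [mem_filter] at hi ⊢
  exact ⟨hi.1, fun j hj => h j (hi.2 j hj)⟩

def zset {n : ℕ} (x : Point n) : Finset (Fin n) := univ.filter fun i => x i = false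

lemma zset_empty_iff (x : Point n) : (zset x).card = 0 ↔ x = allOnes n := by
  rw [Finset.card_eq_zero]
  constructor
  · intro h
    funext i
    by_contra hc
    have : x i = false := by cases hx : x i <;> simp_all [allOnes]
    have : i ∈ zset x := by rw [zset, mem_filter]; exact ⟨mem_univ i, this⟩
    rw [h] at this
    exact absurd this (notMem_empty i)
  · intro h
    rw [h]
    ext i
    simp [zset, allOnes]

lemma zset_update {x : Point n} {i : Fin n} (hi : i ∈ zset x) :
    zset (Function.update x i true) = (zset x).erase i := by
  ext j
  simp only [zset, mem_filter, mem_univ, true_and, mem_erase]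
  by_cases hji : j = i
  · subst hji; simp [Function.update_self]
  · simp [Function.update_of_ne hji, hji]

lemma hamming_update {x : Point n} {i : Fin n} (hi : x i = false) :
    hammingDist x (Function.update x i true) = 1 := by
  rw [hammingDist_def']
  have : (univ.filter fun j => x j ≠ Function.update x i true j) = {i} := by
    ext j
    simp only [mem_filter, mem_univ, true_and, mem_singleton]
    by_cases hji : j = i
    · subst hji; simp [Function.update_self, hi]
    · simp [Function.update_of_ne hji, hji]
  rw [this, card_singleton]

lemma update_ne {x : Point n} {i : Fin n} (hi : x i = false) :
    Function.update x i true ≠ x := by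
  intro h
  have := congrFun h i
  rw [Function.update_self] at this
  rw [hi] at this
  simp at this

/-- The per-generation probability of flipping one given zero bit and accepting. -/
noncomputable def beta (n : ℕ) : ℝ := (1 - 1/(n:ℝ))^(n-1) / (4*n)

lemma beta_pos (hn : 1 ≤ n) : 0 < beta n := by
  unfold beta
  have hnR : (1:ℝ) ≤ (n:ℝ) := by exact_mod_cast hn
  apply div_pos _ (by positivity)
  rcases Nat.eq_or_lt_of_le hn with h | h
  · rw [← h]; norm_num
  · have h2 : (2:ℝ) ≤ (n:ℝ) := by exact_mod_cast h
    apply pow_pos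
    have : 1/(n:ℝ) ≤ 1/2 := by
      apply div_le_div_of_nonneg_left <;> linarith
    linarith

lemma stepEA_lower (hn : 1 ≤ n) (hp0 : 0 ≤ p) (hp2 : p ≤ 1/2)
    {x : Point n} {i : Fin n} (hi : i ∈ zset x) :
    beta n ≤ stepEA n p x (Function.update x i true) := by
  have hp1 : p ≤ 1 := by linarith
  have hxi : x i = false := by
    rw [zset, mem_filter] at hi; exact hi.2
  unfold stepEA step
  rw [if_neg (update_ne hxi), add_zero]
  have hmut : mutProb n x (Function.update x i true) = (1/(n:ℝ)) * (1 - 1/(n:ℝ))^(n-1) := by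
    unfold mutProb
    rw [hamming_update hxi, pow_one]
  have hacc : (1-p)^2 ≤ accProb n (oneBitNoise n p) (fun z => (LO z:ℝ)) x (Function.update x i true) := by
    apply acc_lower hp0 hp1
    apply LO_mono
    intro j hj
    by_cases hji : j = i
    · subst hji; rw [Function.update_self]
    · rw [Function.update_of_ne hji]; exact hj
  have hq : (1/4 : ℝ) ≤ (1-p)^2 := by nlinarith
  have hnR : (1:ℝ) ≤ (n:ℝ) := by exact_mod_cast hn
  have hpow : (0:ℝ) ≤ (1 - 1/(n:ℝ))^(n-1) := by
    apply pow_nonneg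
    have : 1/(n:ℝ) ≤ 1 := by rw [div_le_one (by linarith)]; linarith
    linarith
  have hacc0 : (0:ℝ) ≤ (1-p)^2 := by positivity
  calc beta n = (1/(n:ℝ)) * (1 - 1/(n:ℝ))^(n-1) * (1/4) := by unfold beta; ring
    _ ≤ (1/(n:ℝ)) * (1 - 1/(n:ℝ))^(n-1) * (1-p)^2 := by
      apply mul_le_mul_of_nonneg_left hq
      positivity
    _ ≤ mutProb n x (Function.update x i true) *
        accProb n (oneBitNoise n p) (fun z => (LO z:ℝ)) x (Function.update x i true) := by
      rw [hmut]
      apply mul_le_mul_of_nonneg_left hacc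
      positivity
end Step


/-- Probability that a Markov chain with transition matrix `P` started in `x`
does not visit `opt` within the first `t` generations (time `0` included). -/
noncomputable def survive (n : ℕ) (P : Point n → Point n → ℝ) (opt : Point n) :
    ℕ → Point n → ℝ
  | 0, x => if x = opt then 0 else 1
  | t + 1, x => if x = opt then 0 else ∑ y : Point n, P x y * survive n P opt t y

section Survive
variable {n : ℕ} {P : Point n → Point n → ℝ} {opt : Point n}

lemma survive_zero (x : Point n) :
    survive n P opt 0 x = if x = opt then 0 else 1 := rfl

lemma survive_succ (t : ℕ) (x : Point n) :
    survive n P opt (t+1) x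
      = if x = opt then 0 else ∑ y : Point n, P x y * survive n P opt t y := rfl

lemma survive_opt (t : ℕ) : survive n P opt t opt = 0 := by
  cases t
  · rw [survive_zero, if_pos rfl]
  · rw [survive_succ, if_pos rfl]

lemma survive_le_one (hP0 : ∀ x y, 0 ≤ P x y) (hP1 : ∀ x, ∑ y : Point n, P x y = 1) :
    ∀ t x, survive n P opt t x ≤ 1 := by
  intro t
  induction t with
  | zero => intro x; rw [survive_zero]; split <;> norm_num
  | succ t ih =>
    intro x
    rw [survive_succ]
    split
    · norm_num
    · calc ∑ y : Point n, P x y * survive n P opt t y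
          ≤ ∑ y : Point n, P x y * 1 := by
            apply Finset.sum_le_sum; intro y _
            exact mul_le_mul_of_nonneg_left (ih y) (hP0 x y)
        _ = 1 := by simp only [mul_one]; exact hP1 x

lemma survive_nonneg (hP0 : ∀ x y, 0 ≤ P x y) :
    ∀ t x, 0 ≤ survive n P opt t x := by
  intro t
  induction t with
  | zero => intro x; rw [survive_zero]; split <;> norm_num
  | succ t ih =>
    intro x
    rw [survive_succ]
    split
    · norm_num
    · apply Finset.sum_nonneg; intro y _
      exact mul_nonneg (hP0 x y) (ih y)

lemma survive_succ_le (hP0 : ∀ x y, 0 ≤ P x y) (hP1 : ∀ x, ∑ y : Point n, P x y = 1) :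
    ∀ t x, survive n P opt (t+1) x ≤ survive n P opt t x := by
  intro t
  induction t with
  | zero =>
    intro x
    rw [survive_succ, survive_zero]
    split
    · norm_num
    · calc ∑ y : Point n, P x y * survive n P opt 0 y
          ≤ ∑ y : Point n, P x y * 1 := by
            apply Finset.sum_le_sum; intro y _
            exact mul_le_mul_of_nonneg_left (survive_le_one hP0 hP1 0 y) (hP0 x y)
        _ = 1 := by simp only [mul_one]; exact hP1 x
  | succ t ih =>
    intro x
    rw [survive_succ, survive_succ]
    split
    · norm_num
    · apply Finset.sum_le_sum; intro y _
      exact mul_le_mul_of_nonneg_left (ih y) (hP0 x y)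

lemma survive_anti (hP0 : ∀ x y, 0 ≤ P x y) (hP1 : ∀ x, ∑ y : Point n, P x y = 1)
    {s t : ℕ} (hst : s ≤ t) (x : Point n) :
    survive n P opt t x ≤ survive n P opt s x :=
  antitone_nat_of_succ_le (f := fun t => survive n P opt t x)
    (fun t => survive_succ_le hP0 hP1 t x) hst

lemma survive_add (hP0 : ∀ x y, 0 ≤ P x y) {s : ℕ} {M : ℝ}
    (hM : ∀ y, survive n P opt s y ≤ M) :
    ∀ t x, survive n P opt (t + s) x ≤ M * survive n P opt t x := by
  intro t
  induction t with
  | zero =>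
    intro x
    rw [Nat.zero_add]
    by_cases hx : x = opt
    · rw [hx, survive_opt, survive_opt, mul_zero]
    · rw [survive_zero, if_neg hx, mul_one]
      exact hM x
  | succ t ih =>
    intro x
    have he : t + 1 + s = (t + s) + 1 := by omega
    rw [he]
    rw [survive_succ, survive_succ]
    by_cases hx : x = opt
    · rw [if_pos hx, if_pos hx, mul_zero]
    · rw [if_neg hx, if_neg hx, Finset.mul_sum]
      apply Finset.sum_le_sum; intro y _
      calc P x y * survive n P opt (t+s) y ≤ P x y * (M * survive n P opt t y) :=
            mul_le_mul_of_nonneg_left (ih y) (hP0 x y)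
        _ = M * (P x y * survive n P opt t y) := by ring

end Survive

section Hit
variable {n : ℕ} {p : ℝ}

/-- `cfun n k` = probability of fixing all `k` zero bits in `k` consecutive generations. -/
noncomputable def cfun (n k : ℕ) : ℝ := (Nat.factorial k : ℝ) * beta n ^ k

lemma cfun_zero : cfun n 0 = 1 := by simp [cfun]

lemma cfun_succ (k : ℕ) : cfun n (k+1) = cfun n k * ((k+1 : ℕ) * beta n) := by
  unfold cfun
  rw [Nat.factorial_succ]
  push_cast
  ring

lemma cfun_nonneg (hn : 1 ≤ n) (k : ℕ) : 0 ≤ cfun n k := by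
  unfold cfun
  have := (beta_pos hn).le
  positivity

lemma update_injOn {x : Point n} :
    ∀ i ∈ zset x, ∀ j ∈ zset x,
      Function.update x i true = Function.update x j true → i = j := by
  intro i hi j hj h
  by_contra hij
  have := congrFun h i
  rw [Function.update_self, Function.update_of_ne (fun hc => hij hc) true x] at this
  have hxi : x i = false := (mem_filter.1 hi).2
  rw [hxi] at this
  simp at this

lemma hit_lemma (hn : 1 ≤ n) (hp0 : 0 ≤ p) (hp2 : p ≤ 1/2) :
    ∀ k (x : Point n), (zset x).card = k →
      survive n (stepEA n p) (allOnes n) k x ≤ 1 - cfun n k := by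
  have hp1 : p ≤ 1 := by linarith
  have hP0 : ∀ x y : Point n, 0 ≤ stepEA n p x y := stepEA_nonneg hn hp0 hp1
  have hP1 : ∀ x : Point n, ∑ y : Point n, stepEA n p x y = 1 := stepEA_sum hn hp0 hp1
  intro k
  induction k with
  | zero =>
    intro x hx
    have : x = allOnes n := (zset_empty_iff x).1 hx
    rw [this, survive_opt, cfun_zero]
    norm_num
  | succ k ih =>
    intro x hx
    have hxopt : x ≠ allOnes n := by
      intro h
      rw [← zset_empty_iff x] at h
      omega
    rw [survive_succ, if_neg hxopt]
    set Y : Finset (Point n) := (zset x).image (fun i => Function.update x i true) with hY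
    have hYsub : Y ⊆ univ := subset_univ Y
    have hmemY : ∀ y ∈ Y, (zset y).card = k := by
      intro y hy
      rw [hY, mem_image] at hy
      obtain ⟨i, hi, rfl⟩ := hy
      rw [zset_update hi, card_erase_of_mem hi, hx]
      omega
    have hsplit := Finset.sum_sdiff (f := fun y => stepEA n p x y *
      survive n (stepEA n p) (allOnes n) k y) hYsub
    have hsumY : ∑ y ∈ Y, stepEA n p x y ≥ (k+1 : ℕ) * beta n := by
      rw [hY, Finset.sum_image update_injOn]
      calc ((k+1 : ℕ) : ℝ) * beta n = (zset x).card • beta n := by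
            rw [hx, nsmul_eq_mul]
        _ ≤ ∑ i ∈ zset x, stepEA n p x (Function.update x i true) := by
            apply Finset.card_nsmul_le_sum
            intro i hi
            exact stepEA_lower hn hp0 hp2 hi
    have hbound1 : ∑ y ∈ Y, stepEA n p x y * survive n (stepEA n p) (allOnes n) k y
        ≤ ∑ y ∈ Y, stepEA n p x y * (1 - cfun n k) := by
      apply Finset.sum_le_sum
      intro y hy
      exact mul_le_mul_of_nonneg_left (ih y (hmemY y hy)) (hP0 x y)
    have hbound2 : ∑ y ∈ univ \ Y, stepEA n p x y * survive n (stepEA n p) (allOnes n) k y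
        ≤ ∑ y ∈ univ \ Y, stepEA n p x y := by
      calc ∑ y ∈ univ \ Y, stepEA n p x y * survive n (stepEA n p) (allOnes n) k y
          ≤ ∑ y ∈ univ \ Y, stepEA n p x y * 1 := by
            apply Finset.sum_le_sum
            intro y _
            exact mul_le_mul_of_nonneg_left (survive_le_one hP0 hP1 k y) (hP0 x y)
        _ = ∑ y ∈ univ \ Y, stepEA n p x y := by simp only [mul_one]
    have hsumsplit : ∑ y ∈ univ \ Y, stepEA n p x y + ∑ y ∈ Y, stepEA n p x y = 1 := by
      rw [Finset.sum_sdiff hYsub]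
      exact hP1 x
    have hc := cfun_nonneg hn k
    calc ∑ y : Point n, stepEA n p x y * survive n (stepEA n p) (allOnes n) k y
        = ∑ y ∈ univ \ Y, stepEA n p x y * survive n (stepEA n p) (allOnes n) k y
          + ∑ y ∈ Y, stepEA n p x y * survive n (stepEA n p) (allOnes n) k y := hsplit.symm
      _ ≤ ∑ y ∈ univ \ Y, stepEA n p x y + ∑ y ∈ Y, stepEA n p x y * (1 - cfun n k) :=
          add_le_add hbound2 hbound1
      _ = (∑ y ∈ univ \ Y, stepEA n p x y + ∑ y ∈ Y, stepEA n p x y)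
          - cfun n k * ∑ y ∈ Y, stepEA n p x y := by
          rw [Finset.mul_sum]
          rw [Finset.sum_congr rfl (fun y _ => by ring :
            ∀ y ∈ Y, stepEA n p x y * (1 - cfun n k)
              = stepEA n p x y - cfun n k * stepEA n p x y)]
          rw [Finset.sum_sub_distrib]
          ring
      _ = 1 - cfun n k * ∑ y ∈ Y, stepEA n p x y := by rw [hsumsplit]
      _ ≤ 1 - cfun n k * ((k+1 : ℕ) * beta n) := by
          have := mul_le_mul_of_nonneg_left hsumY hc
          linarith
      _ = 1 - cfun n (k+1) := by rw [cfun_succ]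

end Hit

section Global
variable {n : ℕ} {p : ℝ}

lemma one_sub_inv_nonneg (hn : 1 ≤ n) : (0:ℝ) ≤ 1 - 1/(n:ℝ) := by
  have hnR : (1:ℝ) ≤ (n:ℝ) := by exact_mod_cast hn
  have : 1/(n:ℝ) ≤ 1 := by rw [div_le_one (by linarith)]; linarith
  linarith

lemma beta_le (hn : 1 ≤ n) : beta n ≤ 1/(4*(n:ℝ)) := by
  have hnR : (1:ℝ) ≤ (n:ℝ) := by exact_mod_cast hn
  unfold beta
  apply div_le_div_of_nonneg_right _ (by positivity)
  · exact pow_le_one₀ (one_sub_inv_nonneg hn) (by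
      have : (0:ℝ) ≤ 1/(n:ℝ) := by positivity
      linarith)

lemma cfun_step_le (hn : 1 ≤ n) {j : ℕ} (hj : j + 1 ≤ n) : cfun n (j+1) ≤ cfun n j := by
  rw [cfun_succ]
  have hc := cfun_nonneg hn j
  have hb := (beta_pos hn).le
  have h1 : ((j+1 : ℕ):ℝ) * beta n ≤ 1 := by
    have h2 : ((j+1 : ℕ):ℝ) ≤ (n:ℝ) := by exact_mod_cast hj
    have h3 := beta_le hn
    have hnR : (1:ℝ) ≤ (n:ℝ) := by exact_mod_cast hn
    calc ((j+1 : ℕ):ℝ) * beta n ≤ (n:ℝ) * (1/(4*(n:ℝ))) := by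
          apply mul_le_mul h2 h3 (beta_pos hn).le (by linarith)
      _ = 1/4 := by field_simp
      _ ≤ 1 := by norm_num
  calc cfun n j * (((j+1 : ℕ):ℝ) * beta n) ≤ cfun n j * 1 :=
        mul_le_mul_of_nonneg_left h1 hc
    _ = cfun n j := mul_one _

lemma cfun_anti (hn : 1 ≤ n) {j k : ℕ} (hjk : j ≤ k) (hk : k ≤ n) :
    cfun n k ≤ cfun n j := by
  have : ∀ m : ℕ, j + m ≤ n → cfun n (j + m) ≤ cfun n j := by
    intro m
    induction m with
    | zero => intro _; exact le_refl _
    | succ m ih =>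
      intro h
      have h1 : j + m ≤ n := by omega
      calc cfun n (j + (m+1)) = cfun n ((j + m) + 1) := by ring_nf
        _ ≤ cfun n (j + m) := cfun_step_le hn (by omega)
        _ ≤ cfun n j := ih h1
  have := this (k - j) (by omega)
  rwa [show j + (k - j) = k by omega] at this

lemma cfun_le (hn : 1 ≤ n) {k : ℕ} (hk : k ≤ n) : cfun n n ≤ cfun n k :=
  cfun_anti hn hk (le_refl n)

lemma cfun_le_one (hn : 1 ≤ n) {k : ℕ} (hk : k ≤ n) : cfun n k ≤ 1 := by
  have := cfun_anti hn (Nat.zero_le k) hk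
  rwa [cfun_zero] at this

lemma survive_horizon (hn : 1 ≤ n) (hp0 : 0 ≤ p) (hp2 : p ≤ 1/2) (x : Point n) :
    survive n (stepEA n p) (allOnes n) n x ≤ 1 - cfun n n := by
  have hp1 : p ≤ 1 := by linarith
  have hP0 : ∀ x y : Point n, 0 ≤ stepEA n p x y := stepEA_nonneg hn hp0 hp1
  have hP1 : ∀ x : Point n, ∑ y : Point n, stepEA n p x y = 1 := stepEA_sum hn hp0 hp1
  have hk : (zset x).card ≤ n := by
    calc (zset x).card ≤ (univ : Finset (Fin n)).card := card_le_card (subset_univ _)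
      _ = n := by rw [card_univ, Fintype.card_fin]
  calc survive n (stepEA n p) (allOnes n) n x
      ≤ survive n (stepEA n p) (allOnes n) (zset x).card x := survive_anti hP0 hP1 hk x
    _ ≤ 1 - cfun n (zset x).card := hit_lemma hn hp0 hp2 _ x rfl
    _ ≤ 1 - cfun n n := by
        have := cfun_le hn hk
        linarith

lemma survive_geom (hn : 1 ≤ n) (hp0 : 0 ≤ p) (hp2 : p ≤ 1/2) :
    ∀ (j : ℕ) (x : Point n),
      survive n (stepEA n p) (allOnes n) (j * n) x ≤ (1 - cfun n n)^j := by
  have hp1 : p ≤ 1 := by linarith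
  have hP0 : ∀ x y : Point n, 0 ≤ stepEA n p x y := stepEA_nonneg hn hp0 hp1
  have hP1 : ∀ x : Point n, ∑ y : Point n, stepEA n p x y = 1 := stepEA_sum hn hp0 hp1
  have hq1 : 0 ≤ 1 - cfun n n := by have := cfun_le_one hn (le_refl n); linarith
  intro j
  induction j with
  | zero =>
    intro x
    rw [Nat.zero_mul, pow_zero]
    exact survive_le_one hP0 hP1 0 x
  | succ j ih =>
    intro x
    have he : (j+1) * n = n + j * n := by ring
    rw [he]
    have h1 : survive n (stepEA n p) (allOnes n) (n + j * n) x
        ≤ (1 - cfun n n)^j * survive n (stepEA n p) (allOnes n) n x := by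
      have hM : ∀ y : Point n, survive n (stepEA n p) (allOnes n) (j * n) y
          ≤ (1 - cfun n n)^j := ih
      exact survive_add hP0 hM n x
    calc survive n (stepEA n p) (allOnes n) (n + j * n) x
        ≤ (1 - cfun n n)^j * survive n (stepEA n p) (allOnes n) n x := h1
      _ ≤ (1 - cfun n n)^j * (1 - cfun n n) :=
          mul_le_mul_of_nonneg_left (survive_horizon hn hp0 hp2 x) (pow_nonneg hq1 j)
      _ = (1 - cfun n n)^(j+1) := by ring

lemma survive_final (hn : 1 ≤ n) (hp0 : 0 ≤ p) (hp2 : p ≤ 1/2) (t : ℕ) (x : Point n) :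
    survive n (stepEA n p) (allOnes n) t x ≤ (1 - cfun n n)^(t / n) := by
  have hp1 : p ≤ 1 := by linarith
  have hP0 : ∀ x y : Point n, 0 ≤ stepEA n p x y := stepEA_nonneg hn hp0 hp1
  have hP1 : ∀ x : Point n, ∑ y : Point n, stepEA n p x y = 1 := stepEA_sum hn hp0 hp1
  calc survive n (stepEA n p) (allOnes n) t x
      ≤ survive n (stepEA n p) (allOnes n) ((t / n) * n) x :=
        survive_anti hP0 hP1 (Nat.div_mul_le_self t n) x
    _ ≤ (1 - cfun n n)^(t / n) := survive_geom hn hp0 hp2 (t/n) x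

end Global

section Analytic

lemma one_add_inv_pow_le {m : ℕ} (hm : 1 ≤ m) : (1 + 1/(m:ℝ))^m ≤ 3 := by
  have hmR : (1:ℝ) ≤ (m:ℝ) := by exact_mod_cast hm
  have h1 : (1 + 1/(m:ℝ)) ≤ Real.exp (1/(m:ℝ)) := by
    have := Real.add_one_le_exp (1/(m:ℝ)); linarith
  have h2 : (1 + 1/(m:ℝ))^m ≤ (Real.exp (1/(m:ℝ)))^m := by
    apply pow_le_pow_left₀ (by positivity) h1
  have h3 : (Real.exp (1/(m:ℝ)))^m = Real.exp 1 := by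
    rw [← Real.exp_nat_mul]
    congr 1
    field_simp
  have h4 : Real.exp 1 ≤ 3 := by
    have := Real.exp_one_lt_d9; linarith
  calc (1 + 1/(m:ℝ))^m ≤ (Real.exp (1/(m:ℝ)))^m := h2
    _ = Real.exp 1 := h3
    _ ≤ 3 := h4

lemma third_le_pow {n : ℕ} (hn : 1 ≤ n) : (1/3 : ℝ) ≤ (1 - 1/(n:ℝ))^(n-1) := by
  rcases Nat.eq_or_lt_of_le hn with h | h
  · rw [← h]; norm_num
  · have hm : 1 ≤ n - 1 := by omega
    set m := n - 1 with hmdef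
    have hnm : n = m + 1 := by omega
    have hmR : (1:ℝ) ≤ (m:ℝ) := by exact_mod_cast hm
    have hnR : (n:ℝ) = (m:ℝ) + 1 := by rw [hnm]; push_cast; ring
    rw [hnR]
    have hmul : (1 + 1/(m:ℝ)) * (1 - 1/((m:ℝ)+1)) = 1 := by
      field_simp
      ring
    have hkey : (1 - 1/((m:ℝ)+1)) = (1 + 1/(m:ℝ))⁻¹ :=
      eq_inv_of_mul_eq_one_right hmul
    rw [hkey, inv_pow]
    have hApos : (0:ℝ) < (1 + 1/(m:ℝ))^m := by positivity
    have hA3 : (1 + 1/(m:ℝ))^m ≤ 3 := one_add_inv_pow_le hm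
    calc (1/3 : ℝ) = 3⁻¹ := by norm_num
      _ ≤ ((1 + 1/(m:ℝ))^m)⁻¹ := inv_anti₀ hApos hA3
    
lemma pow_le_three_pow_factorial : ∀ m : ℕ, (m:ℝ)^m ≤ 3^m * (Nat.factorial m : ℝ) := by
  intro m
  induction m with
  | zero => norm_num
  | succ m ih =>
    rcases Nat.eq_zero_or_pos m with h | h
    · subst h; norm_num
    have hmR : (1:ℝ) ≤ (m:ℝ) := by exact_mod_cast h
    have h1 : ((m:ℝ)+1)^m ≤ 3 * (m:ℝ)^m := by
      have hsplit : ((m:ℝ)+1) = (m:ℝ) * (1 + 1/(m:ℝ)) := by field_simp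
      calc ((m:ℝ)+1)^m = (m:ℝ)^m * (1 + 1/(m:ℝ))^m := by rw [hsplit, mul_pow]
        _ ≤ (m:ℝ)^m * 3 := by
            apply mul_le_mul_of_nonneg_left (one_add_inv_pow_le h) (by positivity)
        _ = 3 * (m:ℝ)^m := by ring
    have hfact : ((Nat.factorial (m+1) : ℕ):ℝ) = ((m:ℝ)+1) * (Nat.factorial m : ℝ) := by
      rw [Nat.factorial_succ]; push_cast; ring
    have hfm : (0:ℝ) ≤ (Nat.factorial m : ℝ) := by positivity
    calc ((m+1 : ℕ):ℝ)^(m+1) = ((m:ℝ)+1)^m * ((m:ℝ)+1) := by push_cast; ring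
      _ ≤ (3 * (m:ℝ)^m) * ((m:ℝ)+1) := by
          apply mul_le_mul_of_nonneg_right h1 (by linarith)
      _ ≤ (3 * (3^m * (Nat.factorial m : ℝ))) * ((m:ℝ)+1) := by
          apply mul_le_mul_of_nonneg_right _ (by linarith)
          apply mul_le_mul_of_nonneg_left ih (by norm_num)
      _ = 3^(m+1) * (((m:ℝ)+1) * (Nat.factorial m : ℝ)) := by ring
      _ = 3^(m+1) * ((Nat.factorial (m+1) : ℕ):ℝ) := by rw [hfact]

lemma q_lower {n : ℕ} (hn : 1 ≤ n) : ((1:ℝ)/36)^n ≤ cfun n n := by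
  have hnR : (1:ℝ) ≤ (n:ℝ) := by exact_mod_cast hn
  have hn0 : (n:ℝ) ≠ 0 := by linarith
  have hb : 1/(12*(n:ℝ)) ≤ beta n := by
    unfold beta
    have h3 := third_le_pow hn
    calc 1/(12*(n:ℝ)) = (1/3)/(4*(n:ℝ)) := by field_simp; ring
      _ ≤ ((1 - 1/(n:ℝ))^(n-1))/(4*(n:ℝ)) := by
          apply div_le_div_of_nonneg_right h3
          positivity
  have hb0 : (0:ℝ) ≤ 1/(12*(n:ℝ)) := by positivity
  have hfact : (n:ℝ)^n / 3^n ≤ (Nat.factorial n : ℝ) := by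
    have := pow_le_three_pow_factorial n
    rw [div_le_iff₀ (by positivity)]
    linarith [this]
  calc ((1:ℝ)/36)^n = ((n:ℝ)^n / 3^n) * (1/(12*(n:ℝ)))^n := by
        rw [← div_pow, ← mul_pow]
        congr 1
        field_simp <;> ring
    _ ≤ (Nat.factorial n : ℝ) * (1/(12*(n:ℝ)))^n := by
        apply mul_le_mul_of_nonneg_right hfact (by positivity)
    _ ≤ (Nat.factorial n : ℝ) * (beta n)^n := by
        apply mul_le_mul_of_nonneg_left _ (by positivity)
        exact pow_le_pow_left₀ hb0 hb n
    _ = cfun n n := rfl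

end Analytic


/-- Expected optimisation time, measured in fitness evaluations
(`evalsPerGen` evaluations per generation), of a Markov chain with transition
matrix `P` started from a uniformly random search point, until it first hits
`opt`; computed as `evalsPerGen · Σ_t P(T > t)`. -/
noncomputable def expectedTime (n : ℕ) (P : Point n → Point n → ℝ)
    (opt : Point n) (evalsPerGen : ℕ) : ℝ≥0∞ :=
  (evalsPerGen : ℝ≥0∞) * ∑' t : ℕ, ENNReal.ofReal
    ((Fintype.card (Point n) : ℝ)⁻¹ * ∑ x : Point n, survive n P opt t x)

/-- Expected optimisation time (number of fitness evaluations, two per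
generation) of the (1+1) EA with one-bit prior noise probability `p` on
LeadingOnes with problem size `n`, from a uniformly random initial search point. -/
noncomputable def EAtime (n : ℕ) (p : ℝ) : ℝ≥0∞ :=
  expectedTime n (stepEA n p) (allOnes n) 2

/-- **Theorem (exponential upper bound for large noise).**
There exists a constant `C > 0` such that for every `n ≥ 1` and every
`0 ≤ p ≤ 1/2`, the expected optimisation time of the (1+1) EA with one-bit
prior noise probability `p` on LeadingOnes is at most `2^(C·n)`. -/
theorem EA_LeadingOnes_noise_exponential_upper_bound :
    ∃ C : ℝ, 0 < C ∧
      ∀ n : ℕ, 1 ≤ n → ∀ p : ℝ, 0 ≤ p → p ≤ 1 / 2 →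
        EAtime n p ≤ ENNReal.ofReal ((2 : ℝ) ^ (C * n)) := by
  refine ⟨8, by norm_num, ?_⟩
  intro n hn p hp0 hp2
  have hp1 : p ≤ 1 := by linarith
  set q := cfun n n with hqdef
  have hq0 : 0 < q := by
    rw [hqdef]; unfold cfun
    have := beta_pos hn
    positivity
  have hq1 : q ≤ 1 := cfun_le_one hn (le_refl n)
  have h1q : (0:ℝ) ≤ 1 - q := by linarith
  haveI : NeZero n := ⟨by omega⟩
  set R := ENNReal.ofReal (1 - q) with hRdef
  have hcard : (0:ℝ) < (Fintype.card (Point n) : ℝ) := by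
    have : 0 < Fintype.card (Point n) := Fintype.card_pos
    exact_mod_cast this
  have hterm : ∀ t : ℕ, ENNReal.ofReal
      ((Fintype.card (Point n) : ℝ)⁻¹ * ∑ x : Point n, survive n (stepEA n p) (allOnes n) t x)
      ≤ R ^ (t / n) := by
    intro t
    have hsum : ∑ x : Point n, survive n (stepEA n p) (allOnes n) t x
        ≤ (Fintype.card (Point n) : ℝ) * (1-q)^(t/n) := by
      have h := Finset.sum_le_card_nsmul univ
        (fun x => survive n (stepEA n p) (allOnes n) t x) ((1-q)^(t/n))
        (fun x _ => survive_final hn hp0 hp2 t x)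
      rwa [card_univ, nsmul_eq_mul] at h
    have havg : (Fintype.card (Point n) : ℝ)⁻¹
        * ∑ x : Point n, survive n (stepEA n p) (allOnes n) t x ≤ (1-q)^(t/n) := by
      have h2 := mul_le_mul_of_nonneg_left hsum (le_of_lt (inv_pos.2 hcard))
      rwa [← mul_assoc, inv_mul_cancel₀ (ne_of_gt hcard), one_mul] at h2
    calc ENNReal.ofReal ((Fintype.card (Point n) : ℝ)⁻¹
          * ∑ x : Point n, survive n (stepEA n p) (allOnes n) t x)
        ≤ ENNReal.ofReal ((1-q)^(t/n)) := ENNReal.ofReal_le_ofReal havg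
      _ = R ^ (t/n) := ENNReal.ofReal_pow h1q _
  have hgeo : ∑' (j : ℕ), R ^ j = (1 - R)⁻¹ := ENNReal.tsum_geometric R
  have h1R : 1 - R = ENNReal.ofReal q := by
    have h := ENNReal.ofReal_sub 1 h1q
    rw [show (1 : ℝ) - (1-q) = q by ring] at h
    rw [hRdef, h, ENNReal.ofReal_one]
  have htsum : (∑' t : ℕ, ENNReal.ofReal ((Fintype.card (Point n) : ℝ)⁻¹
      * ∑ x : Point n, survive n (stepEA n p) (allOnes n) t x))
      ≤ (n : ℝ≥0∞) * ENNReal.ofReal q⁻¹ := by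
    calc (∑' t : ℕ, ENNReal.ofReal ((Fintype.card (Point n) : ℝ)⁻¹
        * ∑ x : Point n, survive n (stepEA n p) (allOnes n) t x))
        ≤ ∑' t : ℕ, R ^ (t / n) := ENNReal.tsum_le_tsum hterm
      _ = ∑' b : ℕ × Fin n, R ^ (b.1) :=
          Equiv.tsum_eq (Nat.divModEquiv n) (fun b : ℕ × Fin n => R ^ b.1)
      _ = ∑' (j : ℕ), ∑' (_ : Fin n), R ^ j :=
          ENNReal.tsum_prod (f := fun j (_ : Fin n) => R ^ j)
      _ = ∑' (j : ℕ), (n : ℝ≥0∞) * R ^ j := by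
          congr 1
          funext j
          rw [tsum_fintype]
          simp [Finset.sum_const]
      _ = (n : ℝ≥0∞) * ∑' (j : ℕ), R ^ j := ENNReal.tsum_mul_left
      _ = (n : ℝ≥0∞) * (1 - R)⁻¹ := by rw [hgeo]
      _ = (n : ℝ≥0∞) * ENNReal.ofReal q⁻¹ := by
          rw [h1R, ← ENNReal.ofReal_inv_of_pos hq0]
  -- real-number endgame
  have hq36 : q⁻¹ ≤ (36:ℝ)^n := by
    have h1 := q_lower hn
    have h2 : (0:ℝ) < ((1:ℝ)/36)^n := by positivity
    have h3 := inv_anti₀ h2 h1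
    calc q⁻¹ ≤ (((1:ℝ)/36)^n)⁻¹ := h3
      _ = (36:ℝ)^n := by
        rw [one_div, inv_pow, inv_inv]
  have hfin : 2*((n:ℝ) * q⁻¹) ≤ (2:ℝ)^(8*n : ℕ) := by
    have e1 : (36:ℝ)^n ≤ (2:ℝ)^(6*n) := by
      rw [pow_mul]
      apply pow_le_pow_left₀ (by norm_num) (by norm_num)
    have en : (n:ℝ) ≤ (2:ℝ)^n := by
      have := (Nat.lt_two_pow_self (n := n)).le
      exact_mod_cast this
    have e2 : 2*(n:ℝ) ≤ (2:ℝ)^(2*n) := by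
      calc 2*(n:ℝ) ≤ 2*(2:ℝ)^n := by linarith
        _ = (2:ℝ)^(n+1) := by ring
        _ ≤ (2:ℝ)^(2*n) := by
            apply pow_le_pow_right₀ (by norm_num) (by omega)
    have hqinv0 : (0:ℝ) ≤ q⁻¹ := by positivity
    calc 2*((n:ℝ) * q⁻¹) = (2*(n:ℝ)) * q⁻¹ := by ring
      _ ≤ (2:ℝ)^(2*n) * (2:ℝ)^(6*n) := by
          apply mul_le_mul e2 (le_trans hq36 e1) hqinv0 (by positivity)
      _ = (2:ℝ)^(8*n : ℕ) := by
          rw [← pow_add]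
          congr 1
          ring
  have hrpow : (2:ℝ) ^ ((8:ℝ) * (n:ℕ)) = (2:ℝ)^(8*n : ℕ) := by
    rw [show (8:ℝ) * ((n:ℕ):ℝ) = ((8*n : ℕ):ℝ) by push_cast; ring, Real.rpow_natCast]
  unfold EAtime expectedTime
  calc ((2:ℕ) : ℝ≥0∞) * ∑' t : ℕ, ENNReal.ofReal ((Fintype.card (Point n) : ℝ)⁻¹
      * ∑ x : Point n, survive n (stepEA n p) (allOnes n) t x)
      ≤ ((2:ℕ) : ℝ≥0∞) * ((n : ℝ≥0∞) * ENNReal.ofReal q⁻¹) := mul_le_mul_right htsum _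
    _ = ENNReal.ofReal (2*((n:ℝ) * q⁻¹)) := by
        rw [ENNReal.ofReal_mul (by norm_num), ENNReal.ofReal_mul (by positivity),
          ENNReal.ofReal_natCast]
        norm_num
    _ ≤ ENNReal.ofReal ((2:ℝ)^(8*n : ℕ)) := ENNReal.ofReal_le_ofReal hfin
    _ = ENNReal.ofReal ((2 : ℝ) ^ ((8:ℝ) * n)) := by rw [hrpow]
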